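/- For every fixed positive integer k and every real c > 0, the number of positive integers n ≤ x with exactly k distinct prime factors is smaller than c·x whenever x is sufficiently large; that is, ρ_k(x) = o(x) as x → ∞. -/

import Mathlib

open Finset

-- count of m in [1,M] coprime to r
lemma coprime_count (r M : ℕ) (hr : 0 < r) :
    ((Finset.Icc 1 M).filter (fun m => m.Coprime r)).card ≤ (M / r + 1) * r.totient := by
  classical
  have : ((Finset.Icc 1 M).filter (fun m => m.Coprime r)).card ≤
      ((Finset.range (M / r + 1)) ×ˢ ((Finset.range r).filter r.Coprime)).card := by
    apply Finset.card_le_card_of_injOn (fun m => (m / r, m % r))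
    · intro m hm
      simp only [mem_coe, mem_filter, mem_Icc] at hm
      obtain ⟨⟨h1, h2⟩, hcop⟩ := hm
      simp only [Finset.mem_coe, Finset.mem_product, Finset.mem_range, Finset.mem_filter]
      refine ⟨Nat.lt_succ_of_le (Nat.div_le_div_right h2), Nat.mod_lt _ hr, ?_⟩
      exact Nat.Coprime.symm (by rw [Nat.Coprime, ← Nat.gcd_rec]; exact hcop.symm)
    · intro a ha b hb hab
      have ha' := Nat.div_add_mod a r
      have hb' := Nat.div_add_mod b r
      simp only [Prod.mk.injEq] at hab
      rw [← Nat.div_add_mod a r, ← Nat.div_add_mod b r, hab.1, hab.2]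
  calc _ ≤ _ := this
  _ = (M / r + 1) * r.totient := by
      rw [Finset.card_product, Finset.card_range, Nat.totient]

lemma div_coprime_count (q r M : ℕ) (hq : 0 < q) (hr : 0 < r) :
    ((Finset.Icc 1 M).filter (fun n => q ∣ n ∧ n.Coprime r)).card ≤
      (M / (q * r) + 1) * r.totient := by
  classical
  have key : ((Finset.Icc 1 M).filter (fun n => q ∣ n ∧ n.Coprime r)).card ≤
      ((Finset.Icc 1 (M / q)).filter (fun m => m.Coprime r)).card := by
    apply Finset.card_le_card_of_injOn (fun n => n / q)
    · intro n hn
      simp only [mem_coe, mem_filter, mem_Icc] at hn ⊢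
      obtain ⟨⟨h1, h2⟩, hdvd, hcop⟩ := hn
      refine ⟨⟨?_, Nat.div_le_div_right h2⟩, ?_⟩
      · exact Nat.one_le_div_iff hq |>.mpr (Nat.le_of_dvd h1 hdvd)
      · exact Nat.Coprime.coprime_dvd_left (Nat.div_dvd_of_dvd hdvd) hcop
    · intro a ha b hb hab
      simp only [Finset.coe_filter, Set.mem_setOf_eq, mem_Icc] at ha hb
      obtain ⟨c, hc⟩ := ha.2.1
      obtain ⟨d, hd⟩ := hb.2.1
      subst hc; subst hd
      simp only [Nat.mul_div_cancel_left _ hq] at hab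
      rw [hab]
  calc _ ≤ _ := key
  _ ≤ (M / q / r + 1) * r.totient := coprime_count r (M / q) hr
  _ = (M / (q * r) + 1) * r.totient := by rw [Nat.div_div_eq_div_mul]

lemma totient_prod_primes (B : Finset ℕ) (hB : ∀ p ∈ B, p.Prime) :
    (∏ p ∈ B, p).totient = ∏ p ∈ B, (p - 1) := by
  classical
  induction B using Finset.induction with
  | empty => simp
  | insert p B' hnotmem ih =>
    rw [Finset.prod_insert hnotmem, Finset.prod_insert hnotmem]
    have hp := hB p (Finset.mem_insert_self p B')
    have hcop : Nat.Coprime p (∏ q ∈ B', q) := by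
      apply Nat.Coprime.prod_right
      intro q hq
      exact (Nat.coprime_primes hp (hB q (Finset.mem_insert_of_mem hq))).mpr
        (fun h => hnotmem (h ▸ hq))
    rw [Nat.totient_mul hcop, Nat.totient_prime hp,
      ih (fun q hq => hB q (Finset.mem_insert_of_mem hq))]

lemma exists_primes_prod_lt (ε : ℝ) (hε : 0 < ε) :
    ∃ S : Finset ℕ, (∀ p ∈ S, p.Prime) ∧ ∏ p ∈ S, (1 - 1 / (2 * (p : ℝ))) < ε := by
  classical
  by_contra hcon
  push_neg at hcon
  -- every finset of primes has sum of 1/p at most 2 * (- log ε)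
  have key : ∀ u : Finset ℕ, ∑ n ∈ u, Set.indicator {p | Nat.Prime p}
      (fun n : ℕ => (1 : ℝ) / n) n ≤ 2 * (- Real.log ε) := by
    intro u
    set S := u.filter Nat.Prime with hSdef
    have hS : ∀ p ∈ S, Nat.Prime p := fun p hp => (Finset.mem_filter.mp hp).2
    have h1 : ∑ n ∈ u, Set.indicator {p | Nat.Prime p} (fun n : ℕ => (1 : ℝ) / n) n
        = ∑ p ∈ S, 1 / (p : ℝ) := by
      rw [hSdef, Finset.sum_filter]
      apply Finset.sum_congr rfl
      intro n _
      by_cases hn : Nat.Prime n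
      · simp [hn, Set.indicator_of_mem, Set.mem_setOf_eq]
      · simp [hn, Set.indicator_of_notMem, Set.mem_setOf_eq]
    rw [h1]
    -- product lower bound: ε ≤ ∏ (1 - 1/(2p)) ≤ exp (- ∑ 1/(2p))
    have hexp : ∏ p ∈ S, (1 - 1 / (2 * (p : ℝ))) ≤
        Real.exp (- ∑ p ∈ S, 1 / (2 * (p : ℝ))) := by
      rw [← Finset.sum_neg_distrib, Real.exp_sum]
      apply Finset.prod_le_prod
      · intro p hp
        have hp2 : (2 : ℝ) ≤ (p : ℝ) := by exact_mod_cast (hS p hp).two_le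
        have : 1 / (2 * (p : ℝ)) ≤ 1 / (2 * 2) := by
          apply one_div_le_one_div_of_le <;> nlinarith
        linarith
      · intro p hp
        have := Real.add_one_le_exp (-(1 / (2 * (p : ℝ))))
        linarith
    have hle : ε ≤ Real.exp (- ∑ p ∈ S, 1 / (2 * (p : ℝ))) :=
      le_trans (hcon S hS) hexp
    have := Real.log_le_log hε hle
    rw [Real.log_exp] at this
    have hsum : ∑ p ∈ S, 1 / (2 * (p : ℝ)) = (1 / 2) * ∑ p ∈ S, 1 / (p : ℝ) := by
      rw [Finset.mul_sum]
      apply Finset.sum_congr rfl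
      intro p _
      ring
    rw [hsum] at this
    linarith
  have : Summable (Set.indicator {p | Nat.Prime p} (fun n : ℕ => (1 : ℝ) / n)) :=
    summable_of_sum_le (fun n => Set.indicator_nonneg (fun p _ => by positivity) n) key
  exact not_summable_one_div_on_primes this

lemma perA (S A : Finset ℕ) (hS : ∀ p ∈ S, Nat.Prime p) (hA : A ⊆ S) (k N : ℕ)
    (hAk : A.card ≤ k) (x : ℝ) (hxN : (N : ℝ) ≤ x) (hx0 : 0 ≤ x) :
    (((Finset.Icc 1 N).filter
        (fun n => (∏ p ∈ A, p) ∣ n ∧ n.Coprime (∏ p ∈ S \ A, p))).card : ℝ) ≤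
      x * 2 ^ k * ((∏ p ∈ A, (1 / (2 * (p : ℝ)))) * ∏ p ∈ S \ A, (1 - 1 / (p : ℝ)))
        + ∏ p ∈ S, (p : ℝ) := by
  classical
  set q := ∏ p ∈ A, p with hqdef
  set r := ∏ p ∈ S \ A, p with hrdef
  have hAprime : ∀ p ∈ A, Nat.Prime p := fun p hp => hS p (hA hp)
  have hDprime : ∀ p ∈ S \ A, Nat.Prime p := fun p hp => hS p ((Finset.mem_sdiff.mp hp).1)
  have hq : 0 < q := Finset.prod_pos fun p hp => (hAprime p hp).pos
  have hr : 0 < r := Finset.prod_pos fun p hp => (hDprime p hp).pos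
  have hqR : (q : ℝ) = ∏ p ∈ A, (p : ℝ) := by rw [hqdef]; push_cast; rfl
  have hrR : (r : ℝ) = ∏ p ∈ S \ A, (p : ℝ) := by rw [hrdef]; push_cast; rfl
  have hqRpos : (0 : ℝ) < q := by exact_mod_cast hq
  have hrRpos : (0 : ℝ) < r := by exact_mod_cast hr
  have hphi : ((r.totient : ℝ)) = ∏ p ∈ S \ A, ((p : ℝ) - 1) := by
    rw [hrdef, totient_prod_primes _ hDprime, Nat.cast_prod]
    exact Finset.prod_congr rfl fun p hp => by
      rw [Nat.cast_sub (hDprime p hp).one_le, Nat.cast_one]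
  have hphinn : (0 : ℝ) ≤ (r.totient : ℝ) := by positivity
  -- cast the counting bound
  have h1 := div_coprime_count q r N hq hr
  have h2 : (((Finset.Icc 1 N).filter
      (fun n => q ∣ n ∧ n.Coprime r)).card : ℝ) ≤
      (((N / (q * r) : ℕ) : ℝ) + 1) * (r.totient : ℝ) := by exact_mod_cast h1
  have h3 : ((N / (q * r) : ℕ) : ℝ) ≤ x / ((q : ℝ) * r) := by
    calc ((N / (q * r) : ℕ) : ℝ) ≤ (N : ℝ) / ((q * r : ℕ) : ℝ) := Nat.cast_div_le
    _ ≤ x / ((q : ℝ) * r) := by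
        push_cast
        exact (div_le_div_iff_of_pos_right (by positivity)).mpr hxN
  have hcard : (((Finset.Icc 1 N).filter
      (fun n => q ∣ n ∧ n.Coprime r)).card : ℝ) ≤
      (x / ((q : ℝ) * r) + 1) * (r.totient : ℝ) := by
    refine h2.trans (mul_le_mul_of_nonneg_right (by linarith) hphinn)
  -- the product identity
  have hD : ∀ p ∈ S \ A, (0 : ℝ) < (p : ℝ) := fun p hp => by
    exact_mod_cast (hDprime p hp).pos
  have e1 : (∏ p ∈ A, 1 / (p : ℝ)) * ∏ p ∈ S \ A, (1 - 1 / (p : ℝ)) =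
      (r.totient : ℝ) / ((q : ℝ) * r) := by
    rw [hphi, hqR, hrR]
    rw [show (∏ p ∈ A, 1 / (p : ℝ)) = 1 / ∏ p ∈ A, (p : ℝ) by
      rw [one_div, ← Finset.prod_inv_distrib]; exact Finset.prod_congr rfl fun p _ => (one_div _)]
    rw [show (∏ p ∈ S \ A, (1 - 1 / (p : ℝ))) =
        (∏ p ∈ S \ A, ((p : ℝ) - 1)) / ∏ p ∈ S \ A, (p : ℝ) by
      rw [← Finset.prod_div_distrib]
      exact Finset.prod_congr rfl fun p hp => by
        have := hD p hp; field_simp]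
    have h1 : (∏ p ∈ A, (p : ℝ)) ≠ 0 := by rw [← hqR]; positivity
    have h2 : (∏ p ∈ S \ A, (p : ℝ)) ≠ 0 := by rw [← hrR]; positivity
    field_simp
  have e2 : (∏ p ∈ A, 1 / (p : ℝ)) ≤ 2 ^ k * ∏ p ∈ A, (1 / (2 * (p : ℝ))) := by
    have : (∏ p ∈ A, 1 / (p : ℝ)) = 2 ^ A.card * ∏ p ∈ A, (1 / (2 * (p : ℝ))) := by
      rw [← Finset.prod_const 2, ← Finset.prod_mul_distrib]
      exact Finset.prod_congr rfl fun p hp => by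
        have : (0:ℝ) < (p:ℝ) := by exact_mod_cast (hAprime p hp).pos
        field_simp
    rw [this]
    have h2c : ((2:ℝ)) ^ A.card ≤ 2 ^ k := by
      apply pow_le_pow_right₀ (by norm_num) hAk
    have hnn : (0:ℝ) ≤ ∏ p ∈ A, (1 / (2 * (p : ℝ))) := by positivity
    exact mul_le_mul_of_nonneg_right h2c hnn
  have hDnn : (0:ℝ) ≤ ∏ p ∈ S \ A, (1 - 1 / (p : ℝ)) := by
    apply Finset.prod_nonneg
    intro p hp
    have h2p : (2:ℝ) ≤ (p:ℝ) := by exact_mod_cast (hDprime p hp).two_le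
    have : 1 / (p:ℝ) ≤ 1 / 2 := by
      apply one_div_le_one_div_of_le <;> linarith
    linarith
  -- key inequality
  have hkey : (r.totient : ℝ) / ((q : ℝ) * r) ≤
      2 ^ k * ((∏ p ∈ A, (1 / (2 * (p : ℝ)))) * ∏ p ∈ S \ A, (1 - 1 / (p : ℝ))) := by
    rw [← e1, ← mul_assoc]
    exact mul_le_mul_of_nonneg_right e2 hDnn
  -- error term
  have herr : (r.totient : ℝ) ≤ ∏ p ∈ S, (p : ℝ) := by
    rw [hphi]
    calc (∏ p ∈ S \ A, ((p : ℝ) - 1)) ≤ ∏ p ∈ S \ A, (p : ℝ) := by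
          apply Finset.prod_le_prod
          · intro p hp
            have h2p : (2:ℝ) ≤ (p:ℝ) := by exact_mod_cast (hDprime p hp).two_le
            linarith
          · intro p hp; linarith [hD p hp]
    _ ≤ ∏ p ∈ S, (p : ℝ) := by
          rw [← Finset.prod_sdiff hA]
          have h1q : (1:ℝ) ≤ ∏ p ∈ A, (p:ℝ) := by
            rw [← hqR]; exact_mod_cast hq
          have hnn : (0:ℝ) ≤ ∏ p ∈ S \ A, (p:ℝ) := by rw [← hrR]; positivity
          nlinarith
  calc (((Finset.Icc 1 N).filter
      (fun n => q ∣ n ∧ n.Coprime r)).card : ℝ) ≤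
        (x / ((q : ℝ) * r) + 1) * (r.totient : ℝ) := hcard
  _ = x * ((r.totient : ℝ) / ((q : ℝ) * r)) + (r.totient : ℝ) := by ring
  _ ≤ x * (2 ^ k * ((∏ p ∈ A, (1 / (2 * (p : ℝ)))) * ∏ p ∈ S \ A, (1 - 1 / (p : ℝ))))
        + ∏ p ∈ S, (p : ℝ) :=
      add_le_add (mul_le_mul_of_nonneg_left hkey hx0) herr
  _ = x * 2 ^ k * ((∏ p ∈ A, (1 / (2 * (p : ℝ)))) * ∏ p ∈ S \ A, (1 - 1 / (p : ℝ)))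
        + ∏ p ∈ S, (p : ℝ) := by ring


theorem count_omega_eq_k_littleO (k : ℕ) (hk : 1 ≤ k) :
    ∀ c : ℝ, 0 < c → ∃ X : ℝ, ∀ x : ℝ, X ≤ x →
      ({n : ℕ | 0 < n ∧ (n : ℝ) ≤ x ∧ n.primeFactors.card = k}.ncard : ℝ) < c * x := by
  classical
  intro c hc
  obtain ⟨S, hS, hSprod⟩ := exists_primes_prod_lt (c / 2 ^ (k + 2)) (by positivity)
  set PR : ℝ := ∏ p ∈ S, (p : ℝ) with hPR
  have hPRpos : 0 < PR := by
    rw [hPR]; apply Finset.prod_pos; intro p hp; exact_mod_cast (hS p hp).pos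
  set C : ℝ := 2 ^ S.card * PR with hCdef
  have hCpos : 0 < C := by positivity
  refine ⟨max 1 (2 * (C + 1) / c), fun x hx => ?_⟩
  have hx1 : (1 : ℝ) ≤ x := le_trans (le_max_left _ _) hx
  have hx0 : (0 : ℝ) ≤ x := by linarith
  have hxC : 2 * (C + 1) / c ≤ x := le_trans (le_max_right _ _) hx
  set N := ⌊x⌋₊ with hN
  have hxN : (N : ℝ) ≤ x := Nat.floor_le hx0
  -- convert the set to a finset
  have hset : {n : ℕ | 0 < n ∧ (n : ℝ) ≤ x ∧ n.primeFactors.card = k} =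
      ↑((Finset.Icc 1 N).filter (fun n => n.primeFactors.card = k)) := by
    ext n
    simp only [Set.mem_setOf_eq, Finset.coe_filter, Finset.mem_Icc, Set.mem_setOf_eq]
    constructor
    · rintro ⟨h1, h2, h3⟩
      exact ⟨⟨h1, Nat.le_floor h2⟩, h3⟩
    · rintro ⟨⟨h1, h2⟩, h3⟩
      exact ⟨h1, le_trans (Nat.cast_le.mpr h2) hxN, h3⟩
  rw [hset, Set.ncard_coe_finset]
  -- covering by subsets A of S
  set T : Finset ℕ → Finset ℕ := fun A =>
    (Finset.Icc 1 N).filter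
      (fun n => (∏ p ∈ A, p) ∣ n ∧ n.Coprime (∏ p ∈ S \ A, p)) with hT
  set 𝒜 : Finset (Finset ℕ) := S.powerset.filter (fun A => A.card ≤ k) with h𝒜
  have hcover : (Finset.Icc 1 N).filter (fun n => n.primeFactors.card = k) ⊆
      𝒜.biUnion T := by
    intro n hn
    simp only [Finset.mem_filter, Finset.mem_Icc] at hn
    obtain ⟨⟨hn1, hn2⟩, hnk⟩ := hn
    refine Finset.mem_biUnion.mpr ⟨S ∩ n.primeFactors, ?_, ?_⟩
    · simp only [h𝒜, Finset.mem_filter, Finset.mem_powerset]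
      refine ⟨Finset.inter_subset_left, ?_⟩
      calc (S ∩ n.primeFactors).card ≤ n.primeFactors.card :=
            Finset.card_le_card Finset.inter_subset_right
      _ = k := hnk
    · simp only [hT, Finset.mem_filter, Finset.mem_Icc]
      refine ⟨⟨hn1, hn2⟩, ?_, ?_⟩
      · exact dvd_trans
          (Finset.prod_dvd_prod_of_subset _ _ _ Finset.inter_subset_right)
          n.prod_primeFactors_dvd
      · apply Nat.Coprime.prod_right
        intro p hp
        have hpS : p ∈ S := (Finset.mem_sdiff.mp hp).1
        have hpn : p ∉ n.primeFactors := fun h =>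
          (Finset.mem_sdiff.mp hp).2 (Finset.mem_inter.mpr ⟨hpS, h⟩)
        have hpprime := hS p hpS
        rw [Nat.coprime_comm, hpprime.coprime_iff_not_dvd]
        intro hdvd
        exact hpn (Nat.mem_primeFactors.mpr ⟨hpprime, hdvd, by omega⟩)
  have hcard1 : ((Finset.Icc 1 N).filter (fun n => n.primeFactors.card = k)).card ≤
      ∑ A ∈ 𝒜, (T A).card :=
    le_trans (Finset.card_le_card hcover) (Finset.card_biUnion_le)
  -- real bound
  have hperA : ∀ A ∈ 𝒜, ((T A).card : ℝ) ≤
      x * 2 ^ k * ((∏ p ∈ A, (1 / (2 * (p : ℝ)))) * ∏ p ∈ S \ A, (1 - 1 / (p : ℝ))) + PR := by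
    intro A hA
    simp only [h𝒜, Finset.mem_filter, Finset.mem_powerset] at hA
    exact perA S A hS hA.1 k N hA.2 x hxN hx0
  have hterm_nn : ∀ A ∈ S.powerset, (0 : ℝ) ≤
      (∏ p ∈ A, (1 / (2 * (p : ℝ)))) * ∏ p ∈ S \ A, (1 - 1 / (p : ℝ)) := by
    intro A hA
    rw [Finset.mem_powerset] at hA
    apply mul_nonneg
    · positivity
    · apply Finset.prod_nonneg
      intro p hp
      have h2p : (2 : ℝ) ≤ (p : ℝ) := by
        exact_mod_cast (hS p ((Finset.mem_sdiff.mp hp).1)).two_le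
      have : 1 / (p : ℝ) ≤ 1 / 2 := by apply one_div_le_one_div_of_le <;> linarith
      linarith
  have hsum : (∑ A ∈ 𝒜, ((T A).card : ℝ)) ≤
      x * 2 ^ k * (∑ A ∈ S.powerset,
        (∏ p ∈ A, (1 / (2 * (p : ℝ)))) * ∏ p ∈ S \ A, (1 - 1 / (p : ℝ))) + C := by
    calc (∑ A ∈ 𝒜, ((T A).card : ℝ)) ≤
        ∑ A ∈ 𝒜, (x * 2 ^ k * ((∏ p ∈ A, (1 / (2 * (p : ℝ)))) *
          ∏ p ∈ S \ A, (1 - 1 / (p : ℝ))) + PR) := Finset.sum_le_sum hperA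
    _ = (∑ A ∈ 𝒜, x * 2 ^ k * ((∏ p ∈ A, (1 / (2 * (p : ℝ)))) *
          ∏ p ∈ S \ A, (1 - 1 / (p : ℝ)))) + 𝒜.card * PR := by
        rw [Finset.sum_add_distrib, Finset.sum_const, nsmul_eq_mul]
    _ ≤ (∑ A ∈ S.powerset, x * 2 ^ k * ((∏ p ∈ A, (1 / (2 * (p : ℝ)))) *
          ∏ p ∈ S \ A, (1 - 1 / (p : ℝ)))) + 2 ^ S.card * PR := by
        apply add_le_add
        · apply Finset.sum_le_sum_of_subset_of_nonneg (Finset.filter_subset _ _)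
          intro A hA _
          have := hterm_nn A hA
          positivity
        · apply mul_le_mul_of_nonneg_right _ (le_of_lt hPRpos)
          have : (𝒜.card : ℝ) ≤ (S.powerset.card : ℝ) := by
            exact_mod_cast Finset.card_le_card (Finset.filter_subset _ _)
          rw [Finset.card_powerset] at this
          exact_mod_cast this
    _ = x * 2 ^ k * (∑ A ∈ S.powerset,
        (∏ p ∈ A, (1 / (2 * (p : ℝ)))) * ∏ p ∈ S \ A, (1 - 1 / (p : ℝ))) + C := by
        rw [← Finset.mul_sum, hCdef]
  -- the product identity via prod_add
  have hprodadd : (∑ A ∈ S.powerset,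
      (∏ p ∈ A, (1 / (2 * (p : ℝ)))) * ∏ p ∈ S \ A, (1 - 1 / (p : ℝ))) =
      ∏ p ∈ S, (1 - 1 / (2 * (p : ℝ))) := by
    rw [← Finset.prod_add]
    apply Finset.prod_congr rfl
    intro p hp
    have hp0 : (0 : ℝ) < (p : ℝ) := by exact_mod_cast (hS p hp).pos
    field_simp
    ring
  rw [hprodadd] at hsum
  -- put it together
  have hfinal : ((((Finset.Icc 1 N).filter
      (fun n => n.primeFactors.card = k)).card : ℝ)) ≤
      x * 2 ^ k * (∏ p ∈ S, (1 - 1 / (2 * (p : ℝ)))) + C := by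
    calc ((((Finset.Icc 1 N).filter (fun n => n.primeFactors.card = k)).card : ℝ)) ≤
        (∑ A ∈ 𝒜, ((T A).card : ℝ)) := by exact_mod_cast hcard1
    _ ≤ _ := hsum
  have hprod_nn : (0:ℝ) ≤ ∏ p ∈ S, (1 - 1 / (2 * (p : ℝ))) := by
    apply Finset.prod_nonneg
    intro p hp
    have h2p : (2 : ℝ) ≤ (p : ℝ) := by exact_mod_cast (hS p hp).two_le
    have : 1 / (2 * (p : ℝ)) ≤ 1 / (2 * 2) := by
      apply one_div_le_one_div_of_le <;> nlinarith
    linarith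
  have h2k : (0:ℝ) < x * 2 ^ k := by positivity
  have hmain : x * 2 ^ k * (∏ p ∈ S, (1 - 1 / (2 * (p : ℝ)))) ≤
      x * 2 ^ k * (c / 2 ^ (k + 2)) :=
    mul_le_mul_of_nonneg_left (le_of_lt hSprod) (le_of_lt h2k)
  have hsimp : x * 2 ^ k * (c / 2 ^ (k + 2)) = c * x / 4 := by
    rw [pow_add]
    field_simp
    ring
  have hCx : C < c * x / 2 := by
    have : c * x ≥ 2 * (C + 1) := by
      calc c * x ≥ c * (2 * (C + 1) / c) := by
            apply mul_le_mul_of_nonneg_left hxC (le_of_lt hc)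
      _ = 2 * (C + 1) := by field_simp
    linarith
  have hcx : 0 < c * x := by positivity
  calc ((((Finset.Icc 1 N).filter (fun n => n.primeFactors.card = k)).card : ℝ)) ≤
      x * 2 ^ k * (∏ p ∈ S, (1 - 1 / (2 * (p : ℝ)))) + C := hfinal
  _ ≤ c * x / 4 + C := by rw [← hsimp]; exact add_le_add_left hmain C
  _ < c * x / 4 + c * x / 2 := by linarith
  _ < c * x := by linarith
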